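/- Let N ≥ 2 be even and M ≥ 1. Any sequence N_0 = N, N_1, ..., N_{M-1} = 2 of even positive integers that is strictly decreasing (at least 2 eliminated per round), satisfies N_t ≤ 2·N_{t+1} for all t, and minimizes sum_{t=1}^{M-2} |(N_t - N_{t+1}) - (N_{t-1} - N_t)| among such sequences, must have nonincreasing per-round eliminations: N_t - N_{t+1} ≤ N_{t-1} - N_t for all 1 ≤ t ≤ M-2. -/

import Mathlib

lemma even_list_sum (l : List ℕ) (h : ∀ x ∈ l, Even x) : Even l.sum := by
  induction l with
  | nil => simp
  | cons a t ih =>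
      simp only [List.sum_cons]
      exact (h a (by simp)).add (ih fun x hx => h x (by simp [hx]))

lemma sublist_getLast {s l : List ℕ} (h : s.Sublist l) (hs : s ≠ []) :
    ∃ j : ℕ, ∃ hj : j < l.length, l[j] = s.getLast hs ∧ s.dropLast.Sublist (l.take j) := by
  induction h with
  | slnil => exact absurd rfl hs
  | cons a h ih =>
      obtain ⟨j, hj, h1, h2⟩ := ih hs
      refine ⟨j + 1, by simpa using Nat.succ_lt_succ hj, by simpa using h1, ?_⟩
      simpa using h2.cons a
  | cons_cons a h ih =>
      rename_i s₁ l₁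
      by_cases h1 : s₁ = []
      · subst h1
        exact ⟨0, by simp, by simp [List.getLast], by simp⟩
      · obtain ⟨j, hj, hg, hsub⟩ := ih h1
        refine ⟨j + 1, by simpa using Nat.succ_lt_succ hj, ?_, ?_⟩
        · simpa [List.getLast_cons h1] using hg
        · rw [List.dropLast_cons_of_ne_nil h1, List.take_succ_cons]
          exact hsub.cons₂ a

lemma exists_prefix_bound (l l' : List ℕ) (hp : l'.Perm l) (hsort : l'.Pairwise (· ≥ ·))
    (m : ℕ) (hm1 : 1 ≤ m) (hm2 : m ≤ l.length) :
    ∃ j : ℕ, ∃ hj : j < l.length,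
      l'.getD (m - 1) 0 ≤ l[j] ∧ (l'.take m).sum ≤ (l.take (j + 1)).sum := by
  have hlen : l'.length = l.length := hp.length_eq
  have hsp : (l'.take m).Subperm l := ((List.take_sublist m l').subperm).trans hp.subperm
  obtain ⟨s, hs_perm, hs_sub⟩ := hsp
  have hsne : s ≠ [] := by
    intro h; subst h
    have := hs_perm.length_eq
    simp [List.length_take, hlen] at this
    omega
  obtain ⟨j, hj, hget, hsub⟩ := sublist_getLast hs_sub hsne
  refine ⟨j, hj, ?_, ?_⟩
  · have hmem : s.getLast hsne ∈ l'.take m := hs_perm.mem_iff.mp (List.getLast_mem hsne)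
    obtain ⟨i, hi, hieq⟩ := List.mem_iff_getElem.mp hmem
    have him : i < m := lt_of_lt_of_le hi (by simp [List.length_take])
    have hil : i < l'.length := by simp [List.length_take] at hi; omega
    have hm1l : m - 1 < l'.length := by omega
    rw [List.getD_eq_getElem l' 0 hm1l]
    have : l'[m-1] ≤ l'[i] := by
      rcases Nat.lt_or_ge i (m-1) with h | h
      · have := hsort.rel_get_of_lt (a := ⟨i, hil⟩) (b := ⟨m-1, hm1l⟩) (by simpa using h)
        simpa using this
      · have : i = m - 1 := by omega
        subst this; exact le_refl _
    calc l'[m-1] ≤ l'[i] := this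
      _ = s.getLast hsne := by rw [← hieq]; simp [List.getElem_take]
      _ = l[j] := hget.symm
  · have h1 : (l'.take m).sum = s.sum := hs_perm.sum_eq.symm
    have h2 : s.sum = s.dropLast.sum + s.getLast hsne := by
      conv_lhs => rw [← List.dropLast_append_getLast hsne]
      simp
    have h3 : s.dropLast.sum ≤ (l.take j).sum :=
      hsub.sum_le_sum (fun a _ => Nat.zero_le a)
    rw [h1, h2, List.sum_take_succ l j hj, hget]
    omega

lemma tv_segment (g : ℕ → ℤ) : ∀ b a, a ≤ b →
    |g b - g a| ≤ ∑ s ∈ Finset.Ico a b, |g (s + 1) - g s| := by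
  intro b
  induction b with
  | zero => intro a ha; interval_cases a; simp
  | succ n ih =>
      intro a ha
      rcases Nat.lt_or_ge a (n + 1) with h | h
      · have ha' : a ≤ n := Nat.lt_succ_iff.mp h
        rw [Finset.sum_Ico_succ_top ha']
        calc |g (n+1) - g a| = |(g n - g a) + (g (n+1) - g n)| := by ring_nf
          _ ≤ |g n - g a| + |g (n+1) - g n| := abs_add_le _ _
          _ ≤ _ := by exact add_le_add_left (ih a ha') _
      · have : a = n + 1 := le_antisymm ha h
        subst this; simp

/-- Lemma 1: Any valid elimination schedule minimizing the total
variation of the per-round eliminations has nonincreasing eliminations. -/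
theorem optimal_schedule_noninc (N M : ℕ) (hN : Even N) (hN2 : 2 ≤ N) (hM : 1 ≤ M)
    (Ns : ℕ → ℕ)
    (h0 : Ns 0 = N) (hlast : Ns (M - 1) = 2)
    (heven : ∀ t ≤ M - 1, Even (Ns t))
    (hdec : ∀ t < M - 1, Ns (t + 1) < Ns t)
    (hhalf : ∀ t < M - 1, Ns t ≤ 2 * Ns (t + 1))
    (hmin : ∀ Ns' : ℕ → ℕ,
        Ns' 0 = N → Ns' (M - 1) = 2 →
        (∀ t ≤ M - 1, Even (Ns' t)) →
        (∀ t < M - 1, Ns' (t + 1) < Ns' t) →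
        (∀ t < M - 1, Ns' t ≤ 2 * Ns' (t + 1)) →
        ∑ t ∈ Finset.Icc 1 (M - 2),
            (((Ns t : ℤ) - Ns (t + 1)) - ((Ns (t - 1) : ℤ) - Ns t)).natAbs
          ≤ ∑ t ∈ Finset.Icc 1 (M - 2),
            (((Ns' t : ℤ) - Ns' (t + 1)) - ((Ns' (t - 1) : ℤ) - Ns' t)).natAbs) :
    ∀ t, 1 ≤ t → t ≤ M - 2 →
      (Ns t : ℤ) - Ns (t + 1) ≤ (Ns (t - 1) : ℤ) - Ns t := by
  intro t0 ht1 ht2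
  by_contra hcon
  push_neg at hcon
  have hM3 : 3 ≤ M := by omega
  set K := M - 1 with hK
  have hK2 : 2 ≤ K := by omega
  have hMK : M - 2 = K - 1 := by omega
  have hNsK : Ns K = 2 := hlast
  -- basic facts on the original schedule
  have hgap : ∀ i < K, Ns (i + 1) + 2 ≤ Ns i := by
    intro i hi
    have h1 : Ns (i + 1) < Ns i := hdec i hi
    have he1 : Even (Ns i) := heven i (by omega)
    have he2 : Even (Ns (i + 1)) := heven (i + 1) (by omega)
    rcases he1 with ⟨a, ha⟩; rcases he2 with ⟨b, hb⟩; omega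
  -- the elimination amounts
  set d : ℕ → ℕ := fun i => Ns i - Ns (i + 1) with hd
  set l : List ℕ := (List.range K).map d with hl
  have hllen : l.length = K := by simp [hl]
  have hlget : ∀ i (hi : i < K), l[i]'(by omega) = d i := by
    intro i hi; simp [hl]
  -- telescoping: Ns t = (l.drop t).sum + 2
  have htel0 : ∀ i, i ≤ K → Ns (K - i) = (l.drop (K - i)).sum + 2 := by
    intro i
    induction i with
    | zero =>
        intro _
        simp only [Nat.sub_zero]
        rw [List.drop_eq_nil_of_le (by omega)]
        simpa using hNsK
    | succ n ih =>
        intro h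
        have hn : n ≤ K := by omega
        have hih := ih hn
        set t := K - (n + 1) with htdef
        have ht1 : t + 1 = K - n := by omega
        have htK : t < K := by omega
        have hdrop : l.drop t = (l[t]'(by omega)) :: l.drop (t + 1) :=
          List.drop_eq_getElem_cons (by omega)
        rw [hdrop, List.sum_cons, hlget t htK]
        have : Ns (t + 1) = (l.drop (t + 1)).sum + 2 := by rw [ht1]; exact hih
        have hle : Ns (t + 1) ≤ Ns t := le_of_lt (hdec t htK)
        simp only [hd]
        omega
  have htel : ∀ t, t ≤ K → Ns t = (l.drop t).sum + 2 := by
    intro t ht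
    have := htel0 (K - t) (by omega)
    rwa [Nat.sub_sub_self ht] at this
  have hsumN : l.sum + 2 = N := by
    have := htel 0 (by omega)
    simp at this
    omega
  have hl_elem : ∀ x ∈ l, 2 ≤ x ∧ Even x := by
    intro x hx
    simp only [hl, List.mem_map, List.mem_range] at hx
    obtain ⟨i, hi, rfl⟩ := hx
    constructor
    · have := hgap i hi; simp only [hd]; omega
    · have he1 : Even (Ns i) := heven i (by omega)
      have he2 : Even (Ns (i + 1)) := heven (i + 1) (by omega)
      simp only [hd]
      exact (Nat.even_sub (le_of_lt (hdec i hi))).mpr (by tauto)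
  -- the sorted schedule
  set l' : List ℕ := l.insertionSort (· ≥ ·) with hl'
  have hperm : l'.Perm l := List.perm_insertionSort _ _
  have hsort : l'.Pairwise (· ≥ ·) := List.pairwise_insertionSort _ _
  have hl'len : l'.length = K := by rw [hperm.length_eq, hllen]
  have hl'_elem : ∀ x ∈ l', 2 ≤ x ∧ Even x := fun x hx => hl_elem x (hperm.mem_iff.mp hx)
  set Ns' : ℕ → ℕ := fun t => (l'.drop t).sum + 2 with hNs'
  have hdrop' : ∀ t, t < K → l'.drop t = (l'.getD t 0) :: l'.drop (t + 1) := by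
    intro t ht
    rw [List.getD_eq_getElem l' 0 (by omega)]
    exact List.drop_eq_getElem_cons (by omega)
  have hstep' : ∀ t, t < K → Ns' t = l'.getD t 0 + Ns' (t + 1) := by
    intro t ht
    simp only [hNs']
    rw [hdrop' t ht, List.sum_cons]
    omega
  have hmem_getD : ∀ t, t < K → l'.getD t 0 ∈ l' := by
    intro t ht
    rw [List.getD_eq_getElem l' 0 (by omega)]
    exact List.getElem_mem _
  have hNs'0 : Ns' 0 = N := by
    simp only [hNs', List.drop_zero]
    rw [hperm.sum_eq, hsumN]
  have hNs'last : Ns' (M - 1) = 2 := by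
    simp only [hNs', ← hK]
    rw [List.drop_eq_nil_of_le (by omega)]
    simp
  have hNs'even : ∀ t ≤ M - 1, Even (Ns' t) := by
    intro t _
    simp only [hNs']
    have : Even (l'.drop t).sum :=
      even_list_sum _ (fun x hx => (hl'_elem x (List.mem_of_mem_drop hx)).2)
    rcases this with ⟨a, ha⟩; exact ⟨a + 1, by omega⟩
  have hNs'dec : ∀ t < M - 1, Ns' (t + 1) < Ns' t := by
    intro t ht
    rw [hstep' t ht]
    have := (hl'_elem _ (hmem_getD t ht)).1
    omega
  have hNs'half : ∀ t < M - 1, Ns' t ≤ 2 * Ns' (t + 1) := by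
    intro t ht
    have ht' : t < K := ht
    -- key: l'.getD t 0 ≤ (l'.drop (t+1)).sum + 2
    obtain ⟨j, hj, hval, hsum⟩ := exists_prefix_bound l l' hperm hsort (t + 1)
      (by omega) (by omega)
    have hjK : j < K := by omega
    -- original constraint at j
    have hcj : d j ≤ (l.drop (j + 1)).sum + 2 := by
      have h1 := hhalf j hjK
      have h2 := htel (j + 1) (by omega)
      simp only [hd]
      omega
    have hlj : l[j]'(by omega) = d j := hlget j hjK
    have htake_l : (l.take (j + 1)).sum + (l.drop (j + 1)).sum = l.sum := by
      rw [← List.sum_append, List.take_append_drop]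
    have htake_l' : (l'.take (t + 1)).sum + (l'.drop (t + 1)).sum = l'.sum := by
      rw [← List.sum_append, List.take_append_drop]
    have hsl' : l'.sum = l.sum := hperm.sum_eq
    have hkey : l'.getD t 0 ≤ (l'.drop (t + 1)).sum + 2 := by
      have h5 : (l'.getD (t + 1 - 1) 0) + (l'.take (t + 1)).sum ≤
          l[j]'(by omega) + (l.take (j + 1)).sum := by
        exact Nat.add_le_add hval hsum
      simp only [Nat.add_sub_cancel] at h5
      rw [hlj] at h5
      omega
    rw [hstep' t ht']
    simp only [hNs']
    omega
  -- apply minimality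
  have key := hmin Ns' hNs'0 hNs'last hNs'even hNs'dec hNs'half
  -- the integer elimination function for the original schedule
  set G : ℕ → ℤ := fun i => (Ns i : ℤ) - Ns (i + 1) with hG
  have hGd : ∀ i, i < K → G i = (d i : ℤ) := by
    intro i hi
    have := le_of_lt (hdec i hi)
    simp only [hG, hd]
    omega
  -- argmax of G on range K
  obtain ⟨j, hjmem, hjmax⟩ := Finset.exists_max_image (Finset.range K) G ⟨0, by simp; omega⟩
  have hjK : j < K := Finset.mem_range.mp hjmem
  have hjmax' : ∀ i, i < K → G i ≤ G j := fun i hi => hjmax i (Finset.mem_range.mpr hi)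
  -- G (K-1) = 2
  have hGK1 : G (K - 1) = 2 := by
    have h1 : K - 1 + 1 = K := by omega
    have h2 := hhalf (K - 1) (by omega)
    have h3 := hgap (K - 1) (by omega)
    rw [h1] at h2 h3
    simp only [hG, h1, hNsK]
    have : Ns (K - 1) = 4 := by omega
    rw [this]; norm_num
  -- lower bound for the original TV
  have ht2' : t0 ≤ K - 1 := by omega
  have horig : (G j) - 1 ≤ (((∑ t ∈ Finset.Icc 1 (M - 2),
      (((Ns t : ℤ) - Ns (t + 1)) - ((Ns (t - 1) : ℤ) - Ns t)).natAbs) : ℕ) : ℤ) := by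
    have hcast : (((∑ t ∈ Finset.Icc 1 (M - 2),
        (((Ns t : ℤ) - Ns (t + 1)) - ((Ns (t - 1) : ℤ) - Ns t)).natAbs) : ℕ) : ℤ)
        = ∑ s ∈ Finset.Ico 0 (K - 1), |G (s + 1) - G s| := by
      rw [hMK]
      push_cast [Int.natCast_natAbs]
      have hIcc : Finset.Icc 1 (K - 1) = Finset.Ico 1 K := by
        rw [← Finset.Ico_add_one_right_eq_Icc]; congr 1; omega
      rw [hIcc, Finset.sum_Ico_eq_sum_range, Finset.range_eq_Ico]
      refine Finset.sum_congr (by congr 1) ?_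
      intro i _
      have e2 : 1 + i - 1 = i := by omega
      have e1 : 1 + i = i + 1 := by omega
      rw [e2, e1]
    rw [hcast]
    -- lower bound by case analysis on the position of the max
    have hcon' : G (t0 - 1) < G t0 := by
      simp only [hG]
      rw [show t0 - 1 + 1 = t0 by omega]
      exact hcon
    set a := t0 - 1 with ha
    have hat0 : a + 1 = t0 := by omega
    have hconc : G a + 1 ≤ G (a + 1) := by rw [hat0]; omega
    have haK : a + 1 ≤ K - 1 := by omega
    rcases Nat.lt_or_ge j (a + 1) with hja | hja
    · have hja' : j ≤ a := by omega
      have hsub : ∑ s ∈ Finset.Ico j (K - 1), |G (s + 1) - G s|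
          ≤ ∑ s ∈ Finset.Ico 0 (K - 1), |G (s + 1) - G s| :=
        Finset.sum_le_sum_of_subset_of_nonneg
          (Finset.Ico_subset_Ico (Nat.zero_le _) le_rfl)
          (fun s _ _ => abs_nonneg _)
      have hsplit1 : ∑ s ∈ Finset.Ico j a, |G (s + 1) - G s|
          + ∑ s ∈ Finset.Ico a (K - 1), |G (s + 1) - G s|
          = ∑ s ∈ Finset.Ico j (K - 1), |G (s + 1) - G s| :=
        Finset.sum_Ico_consecutive _ hja' (by omega)
      have hsplit2 : ∑ s ∈ Finset.Ico a (a + 1), |G (s + 1) - G s|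
          + ∑ s ∈ Finset.Ico (a + 1) (K - 1), |G (s + 1) - G s|
          = ∑ s ∈ Finset.Ico a (K - 1), |G (s + 1) - G s| :=
        Finset.sum_Ico_consecutive _ (by omega) haK
      have h1 := tv_segment G a j hja'
      have h2 := tv_segment G (a + 1) a (by omega)
      have h3 := tv_segment G (K - 1) (a + 1) haK
      have e1 : G j - G a ≤ |G a - G j| := by rw [abs_sub_comm]; exact le_abs_self _
      have e2 : G (a + 1) - G a ≤ |G (a + 1) - G a| := le_abs_self _
      have e3 : G (a + 1) - 2 ≤ |G (K - 1) - G (a + 1)| := by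
        rw [hGK1, abs_sub_comm]; exact le_abs_self _
      linarith
    · have hjK1 : j ≤ K - 1 := by omega
      have hGa1j : G (a + 1) ≤ G j := hjmax' (a + 1) (by omega)
      have hsub : ∑ s ∈ Finset.Ico a (K - 1), |G (s + 1) - G s|
          ≤ ∑ s ∈ Finset.Ico 0 (K - 1), |G (s + 1) - G s| :=
        Finset.sum_le_sum_of_subset_of_nonneg
          (Finset.Ico_subset_Ico (Nat.zero_le _) le_rfl)
          (fun s _ _ => abs_nonneg _)
      have hsplit1 : ∑ s ∈ Finset.Ico a (a + 1), |G (s + 1) - G s|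
          + ∑ s ∈ Finset.Ico (a + 1) (K - 1), |G (s + 1) - G s|
          = ∑ s ∈ Finset.Ico a (K - 1), |G (s + 1) - G s| :=
        Finset.sum_Ico_consecutive _ (by omega) haK
      have hsplit2 : ∑ s ∈ Finset.Ico (a + 1) j, |G (s + 1) - G s|
          + ∑ s ∈ Finset.Ico j (K - 1), |G (s + 1) - G s|
          = ∑ s ∈ Finset.Ico (a + 1) (K - 1), |G (s + 1) - G s| :=
        Finset.sum_Ico_consecutive _ hja hjK1
      have h1 := tv_segment G (a + 1) a (by omega)
      have h2 := tv_segment G j (a + 1) hja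
      have h3 := tv_segment G (K - 1) j hjK1
      have e1 : G (a + 1) - G a ≤ |G (a + 1) - G a| := le_abs_self _
      have e2 : G j - G (a + 1) ≤ |G j - G (a + 1)| := le_abs_self _
      have e3 : G j - 2 ≤ |G (K - 1) - G j| := by
        rw [hGK1, abs_sub_comm]; exact le_abs_self _
      linarith
  -- upper bound for the alternative TV
  -- facts relating l' entries to G
  have hmemG : ∀ x ∈ l', (x : ℤ) ≤ G j := by
    intro x hx
    have hx' : x ∈ l := hperm.mem_iff.mp hx
    simp only [hl, List.mem_map, List.mem_range] at hx'
    obtain ⟨i, hi, rfl⟩ := hx'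
    rw [← hGd i hi]
    exact hjmax' i hi
  have hF0 : (l'.getD 0 0 : ℤ) ≤ G j := hmemG _ (hmem_getD 0 (by omega))
  have hFK : (2 : ℤ) ≤ (l'.getD (K - 1) 0 : ℤ) := by
    have := (hl'_elem _ (hmem_getD (K - 1) (by omega))).1
    exact_mod_cast this
  have halt : (((∑ t ∈ Finset.Icc 1 (M - 2),
      (((Ns' t : ℤ) - Ns' (t + 1)) - ((Ns' (t - 1) : ℤ) - Ns' t)).natAbs) : ℕ) : ℤ)
      ≤ G j - 2 := by
    rw [hMK]
    set F : ℕ → ℤ := fun i => (l'.getD i 0 : ℤ) with hF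
    have hanti : ∀ s t : ℕ, s < t → t < K → F t ≤ F s := by
      intro s t hst htK
      have hs : s < l'.length := by omega
      have ht : t < l'.length := by omega
      have := hsort.rel_get_of_lt (a := ⟨s, hs⟩) (b := ⟨t, ht⟩) (by simpa using hst)
      simp only [hF, List.getD_eq_getElem l' 0 hs, List.getD_eq_getElem l' 0 ht]
      exact_mod_cast this
    have hcast : (((∑ t ∈ Finset.Icc 1 (K - 1),
        (((Ns' t : ℤ) - Ns' (t + 1)) - ((Ns' (t - 1) : ℤ) - Ns' t)).natAbs) : ℕ) : ℤ)
        = ∑ t ∈ Finset.Icc 1 (K - 1), (F (t - 1) - F t) := by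
      rw [Nat.cast_sum]
      refine Finset.sum_congr rfl ?_
      intro t htmem
      simp only [Finset.mem_Icc] at htmem
      obtain ⟨h1, h2⟩ := htmem
      have htK : t < K := by omega
      have ht1K : t - 1 < K := by omega
      have h11 : t - 1 + 1 = t := by omega
      have e1 : (Ns' t : ℤ) - Ns' (t + 1) = F t := by
        have := hstep' t htK
        simp only [hF]; omega
      have e2 : (Ns' (t - 1) : ℤ) - Ns' t = F (t - 1) := by
        have := hstep' (t - 1) ht1K
        rw [h11] at this
        simp only [hF]; omega
      rw [Int.natCast_natAbs, e1, e2, abs_sub_comm]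
      exact abs_of_nonneg (by have := hanti (t - 1) t (by omega) htK; omega)
    rw [hcast]
    have hre : ∑ t ∈ Finset.Icc 1 (K - 1), (F (t - 1) - F t)
        = ∑ i ∈ Finset.range (K - 1), (F i - F (i + 1)) := by
      have hIcc : Finset.Icc 1 (K - 1) = Finset.Ico 1 K := by
        rw [← Finset.Ico_add_one_right_eq_Icc]; congr 1; omega
      rw [hIcc, Finset.sum_Ico_eq_sum_range]
      refine Finset.sum_congr (by congr 1) ?_
      intro i _
      congr 1 <;> congr 1 <;> omega
    rw [hre, Finset.sum_range_sub' F (K - 1)]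
    simp only [hF]
    omega
  have := Int.ofNat_le.mpr key
  omega
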